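/- Define the bracket numbers by the recursion [n choose k] = [n-1 choose k] + C(n,k)·[n-1 choose k-1], with [n choose 0] = 1 and [n choose n] = 1. Then for all natural numbers k < n and every triangular set X with n levels, [n choose k] = |△_k(X)|; that is, [n choose k] counts the number of triangular subsets with k levels of a triangular set with n levels. -/

import Mathlib

/-- A triangular set with `k` levels: a subset of `ℕ` of cardinality `T_k`
whose increasing enumeration is arranged in levels of sizes `1, 2, ..., k`.
It is represented by its levels: the `j`-th level has `j + 1` elements and
all elements of earlier levels are smaller than those of later levels. -/
structure TriSet (k : ℕ) where
  level : Fin k → Finset ℕ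
  card_level : ∀ j, (level j).card = (j : ℕ) + 1
  ordered : ∀ i j : Fin k, i < j → ∀ a ∈ level i, ∀ b ∈ level j, a < b

/-- `X ≤ Y` for triangular sets: `X ⊆ Y` and every level of `X` is contained
in a single distinct level of `Y`, with the levels appearing in increasing order. -/
def TriSet.le {k n : ℕ} (X : TriSet k) (Y : TriSet n) : Prop :=
  ∃ f : Fin k → Fin n, StrictMono f ∧ ∀ j, X.level j ⊆ Y.level (f j)


/-- The bracket numbers, defined by the recursion
`[n, k] = [n-1, k] + C(n,k) * [n-1, k-1]` with `[n, 0] = 1` and `[n, n] = 1`. -/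
def brack : ℕ → ℕ → ℕ
  | _, 0 => 1
  | 0, _ + 1 => 0
  | n + 1, k + 1 =>
    if n + 1 = k + 1 then 1
    else brack n (k + 1) + Nat.choose (n + 1) (k + 1) * brack n k

namespace TriSet

theorem ext' {k : ℕ} {X Y : TriSet k} (h : ∀ j, X.level j = Y.level j) : X = Y := by
  cases X; cases Y
  simp only [mk.injEq]
  exact funext h

theorem level_nonempty {k : ℕ} (X : TriSet k) (j : Fin k) : (X.level j).Nonempty :=
  Finset.card_pos.mp (by rw [X.card_level]; omega)

theorem eq_of_mem_mem {k : ℕ} (X : TriSet k) {i j : Fin k} {a : ℕ}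
    (hi : a ∈ X.level i) (hj : a ∈ X.level j) : i = j := by
  rcases lt_trichotomy i j with h | h | h
  · exact absurd (X.ordered i j h a hi a hj) (lt_irrefl a)
  · exact h
  · exact absurd (X.ordered j i h a hj a hi) (lt_irrefl a)

instance : Unique (TriSet 0) where
  default := ⟨Fin.elim0, fun j => j.elim0, fun i => i.elim0⟩
  uniq X := ext' fun j => j.elim0

theorem zero_le {n : ℕ} (Z : TriSet 0) (X : TriSet n) : Z.le X :=
  ⟨Fin.elim0, by intro a; exact a.elim0, fun j => j.elim0⟩

theorem finite_le {n k : ℕ} (X : TriSet n) : Finite {Z : TriSet k // Z.le X} := by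
  classical
  set big : Finset ℕ := Finset.univ.biUnion X.level with hbig
  refine Finite.of_injective (fun Z : {Z : TriSet k // Z.le X} =>
    (fun j => ⟨Z.1.level j, ?_⟩ : Fin k → {S : Finset ℕ // S ∈ big.powerset})) ?_
  · rw [Finset.mem_powerset]
    obtain ⟨f, _, hf⟩ := Z.2
    exact (hf j).trans (Finset.subset_biUnion_of_mem X.level (Finset.mem_univ (f j)))
  · intro Z₁ Z₂ h
    refine Subtype.ext (ext' fun j => ?_)
    exact congrArg Subtype.val (congrFun h j)

theorem strictMono_fin_id {n : ℕ} {f : Fin n → Fin n} (hf : StrictMono f) (i : Fin n) :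
    f i = i := by
  have inst : WellFoundedLT (Fin n) := inferInstance
  have h1 : i ≤ f i := @StrictMono.le_apply (Fin n) _ inst f hf i
  refine le_antisymm ?_ h1
  have hg : StrictMono (fun i : Fin n => (f i.rev).rev) := by
    intro a b hab
    simpa only [Fin.rev_lt_rev] using hf (Fin.rev_lt_rev.mpr hab)
  have h2 : i.rev ≤ (f i.rev.rev).rev :=
    @StrictMono.le_apply (Fin n) _ inst _ hg i.rev
  rw [Fin.rev_rev] at h2
  exact Fin.rev_le_rev.mp (by simpa using h2)

theorem card_le_self {n : ℕ} (X : TriSet n) :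
    Nat.card {Z : TriSet n // Z.le X} = 1 := by
  rw [Nat.card_eq_one_iff_unique]
  have huniq : ∀ Z : TriSet n, Z.le X → Z = X := by
    rintro Z ⟨f, hf, hsub⟩
    refine ext' fun j => ?_
    have hid : f j = j := strictMono_fin_id hf j
    have hsubj := hsub j
    rw [hid] at hsubj
    refine Finset.eq_of_subset_of_card_le hsubj ?_
    rw [Z.card_level, X.card_level]
  constructor
  · constructor
    intro Z₁ Z₂
    exact Subtype.ext ((huniq _ Z₁.2).trans (huniq _ Z₂.2).symm)
  · exact ⟨X, id, strictMono_id, fun j => Finset.Subset.refl _⟩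

theorem card_zero_le {n : ℕ} (X : TriSet n) :
    Nat.card {Z : TriSet 0 // Z.le X} = 1 := by
  rw [Nat.card_eq_one_iff_unique]
  exact ⟨⟨fun Z₁ Z₂ => Subtype.ext (Subsingleton.elim _ _)⟩, ⟨default, zero_le _ _⟩⟩

/-- The first `n` levels of a triangular set with `n+1` levels. -/
def init {n : ℕ} (X : TriSet (n + 1)) : TriSet n where
  level j := X.level j.castSucc
  card_level j := by rw [X.card_level]; simp
  ordered i j hij a ha b hb :=
    X.ordered _ _ (Fin.castSucc_lt_castSucc_iff.mpr hij) a ha b hb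

@[simp] theorem init_level {n : ℕ} (X : TriSet (n + 1)) (j : Fin n) :
    X.init.level j = X.level j.castSucc := rfl

theorem le_init_iff {n m : ℕ} (X : TriSet (n + 1)) (Z : TriSet (m + 1)) :
    Z.le X.init ↔ Z.le X ∧ ¬ Z.level (Fin.last m) ⊆ X.level (Fin.last n) := by
  constructor
  · rintro ⟨f', hf', hsub'⟩
    refine ⟨⟨fun j => (f' j).castSucc, ?_, fun j => hsub' j⟩, ?_⟩
    · intro a b hab
      exact Fin.castSucc_lt_castSucc_iff.mpr (hf' hab)
    · intro hP
      obtain ⟨a, ha⟩ := Z.level_nonempty (Fin.last m)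
      have h1 : a ∈ X.level (f' (Fin.last m)).castSucc := hsub' (Fin.last m) ha
      have h2 : a ∈ X.level (Fin.last n) := hP ha
      have := X.eq_of_mem_mem h1 h2
      exact absurd this (Fin.ne_of_lt (Fin.castSucc_lt_last _))
  · rintro ⟨⟨f, hf, hsub⟩, hP⟩
    have hlast : f (Fin.last m) ≠ Fin.last n := by
      intro h
      exact hP (h ▸ hsub (Fin.last m))
    have hlt : ∀ j : Fin (m + 1), (f j : ℕ) < n := by
      intro j
      have h1 : f j ≤ f (Fin.last m) := hf.monotone (Fin.le_last j)
      have h2 : f (Fin.last m) < Fin.last n := (Fin.le_last _).lt_of_ne hlast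
      have := lt_of_le_of_lt h1 h2
      rw [Fin.lt_def, Fin.val_last] at this
      exact this
    refine ⟨fun j => (f j).castLT (hlt j), ?_, ?_⟩
    · intro a b hab
      simpa only [Fin.lt_def, Fin.coe_castLT] using hf hab
    · intro j
      rw [init_level, Fin.castSucc_castLT]
      exact hsub j

/-- Extend a triangular set with `m` levels inside `X.init` by a top level `S`. -/
def snocTri {n m : ℕ} (X : TriSet (n + 1)) (W : TriSet m) (S : Finset ℕ)
    (hS : S ∈ (X.level (Fin.last n)).powersetCard (m + 1)) (hW : W.le X.init) :
    TriSet (m + 1) where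
  level := Fin.snoc W.level S
  card_level j := by
    induction j using Fin.lastCases with
    | last =>
      rw [Fin.snoc_last, (Finset.mem_powersetCard.mp hS).2, Fin.val_last]
    | cast j => rw [Fin.snoc_castSucc, W.card_level, Fin.coe_castSucc]
  ordered i j hij a ha b hb := by
    obtain ⟨f', hf', hsub'⟩ := hW
    induction j using Fin.lastCases with
    | last =>
      obtain ⟨i', rfl⟩ := Fin.exists_castSucc_eq.mpr (Fin.ne_of_lt hij)
      rw [Fin.snoc_castSucc] at ha
      rw [Fin.snoc_last] at hb
      have ha' : a ∈ X.level (f' i').castSucc := hsub' i' ha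
      have hb' : b ∈ X.level (Fin.last n) := (Finset.mem_powersetCard.mp hS).1 hb
      exact X.ordered _ _ (Fin.castSucc_lt_last _) a ha' b hb'
    | cast j' =>
      obtain ⟨i', rfl⟩ := Fin.exists_castSucc_eq.mpr
        (Fin.ne_of_lt (lt_trans hij (Fin.castSucc_lt_last j')))
      rw [Fin.snoc_castSucc] at ha hb
      exact W.ordered i' j' (Fin.castSucc_lt_castSucc_iff.mp hij) a ha b hb

theorem snocTri_le {n m : ℕ} (X : TriSet (n + 1)) (W : TriSet m) (S : Finset ℕ)
    (hS : S ∈ (X.level (Fin.last n)).powersetCard (m + 1)) (hW : W.le X.init) :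
    (X.snocTri W S hS hW).le X := by
  obtain ⟨f', hf', hsub'⟩ := hW
  refine ⟨Fin.snoc (fun j => (f' j).castSucc) (Fin.last n), ?_, ?_⟩
  · intro a b hab
    induction b using Fin.lastCases with
    | last =>
      obtain ⟨a', rfl⟩ := Fin.exists_castSucc_eq.mpr (Fin.ne_of_lt hab)
      rw [Fin.snoc_castSucc, Fin.snoc_last]
      exact Fin.castSucc_lt_last _
    | cast b' =>
      obtain ⟨a', rfl⟩ := Fin.exists_castSucc_eq.mpr
        (Fin.ne_of_lt (lt_trans hab (Fin.castSucc_lt_last b')))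
      rw [Fin.snoc_castSucc, Fin.snoc_castSucc]
      exact Fin.castSucc_lt_castSucc_iff.mpr (hf' (Fin.castSucc_lt_castSucc_iff.mp hab))
  · intro j
    induction j using Fin.lastCases with
    | last =>
      show (Fin.snoc W.level S : Fin (m+1) → Finset ℕ) (Fin.last m) ⊆ _
      rw [Fin.snoc_last, Fin.snoc_last]
      exact (Finset.mem_powersetCard.mp hS).1
    | cast j' =>
      show (Fin.snoc W.level S : Fin (m+1) → Finset ℕ) j'.castSucc ⊆ _
      rw [Fin.snoc_castSucc, Fin.snoc_castSucc]
      exact hsub' j'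

theorem snocTri_top {n m : ℕ} (X : TriSet (n + 1)) (W : TriSet m) (S : Finset ℕ)
    (hS : S ∈ (X.level (Fin.last n)).powersetCard (m + 1)) (hW : W.le X.init) :
    (X.snocTri W S hS hW).level (Fin.last m) ⊆ X.level (Fin.last n) := by
  show (Fin.snoc W.level S : Fin (m+1) → Finset ℕ) (Fin.last m) ⊆ _
  rw [Fin.snoc_last]
  exact (Finset.mem_powersetCard.mp hS).1

/-- For a top-using `Z ≤ X`, the first `m` levels of `Z` lie in `X.init`. -/
theorem init_le_init {n m : ℕ} (X : TriSet (n + 1)) (Z : TriSet (m + 1))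
    (hle : Z.le X) (hP : Z.level (Fin.last m) ⊆ X.level (Fin.last n)) :
    Z.init.le X.init := by
  obtain ⟨f, hf, hsub⟩ := hle
  obtain ⟨a, ha⟩ := Z.level_nonempty (Fin.last m)
  have hfl : f (Fin.last m) = Fin.last n :=
    X.eq_of_mem_mem (hsub _ ha) (hP ha)
  have hlt : ∀ j : Fin m, (f j.castSucc : ℕ) < n := by
    intro j
    have := hf (Fin.castSucc_lt_last j)
    rw [hfl, Fin.lt_def, Fin.val_last] at this
    exact this
  refine ⟨fun j => (f j.castSucc).castLT (hlt j), ?_, ?_⟩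
  · intro a b hab
    simpa only [Fin.lt_def, Fin.coe_castLT] using
      hf (Fin.castSucc_lt_castSucc_iff.mpr hab)
  · intro j
    rw [init_level, init_level, Fin.castSucc_castLT]
    exact hsub j.castSucc

/-- The bijection for the top-using part. -/
noncomputable def topEquiv {n m : ℕ} (X : TriSet (n + 1)) :
    {Z : TriSet (m + 1) // Z.le X ∧ Z.level (Fin.last m) ⊆ X.level (Fin.last n)} ≃
      ((X.level (Fin.last n)).powersetCard (m + 1)) × {W : TriSet m // W.le X.init} where
  toFun Z :=
    (⟨Z.1.level (Fin.last m), by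
        rw [Finset.mem_powersetCard]
        exact ⟨Z.2.2, by rw [Z.1.card_level, Fin.val_last]⟩⟩,
     ⟨Z.1.init, init_le_init X Z.1 Z.2.1 Z.2.2⟩)
  invFun SW :=
    ⟨X.snocTri SW.2.1 SW.1.1 SW.1.2 SW.2.2,
      snocTri_le X _ _ _ _, snocTri_top X _ _ _ _⟩
  left_inv Z := by
    refine Subtype.ext (ext' fun j => ?_)
    show (Fin.snoc Z.1.init.level (Z.1.level (Fin.last m)) : Fin (m+1) → Finset ℕ) j
      = Z.1.level j
    induction j using Fin.lastCases with
    | last => rw [Fin.snoc_last]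
    | cast j' => rw [Fin.snoc_castSucc, init_level]
  right_inv SW := by
    refine Prod.ext (Subtype.ext ?_) (Subtype.ext (ext' fun j => ?_))
    · show (Fin.snoc SW.2.1.level SW.1.1 : Fin (m+1) → Finset ℕ) (Fin.last m) = SW.1.1
      rw [Fin.snoc_last]
    · show (Fin.snoc SW.2.1.level SW.1.1 : Fin (m+1) → Finset ℕ) j.castSucc
        = SW.2.1.level j
      rw [Fin.snoc_castSucc]

theorem aux : ∀ n k : ℕ, k ≤ n → ∀ X : TriSet n,
    Nat.card {Z : TriSet k // Z.le X} = brack n k := by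
  intro n
  induction n with
  | zero =>
    intro k hk X
    interval_cases k
    rw [card_zero_le]
    rfl
  | succ n ih =>
    intro k hk X
    match k with
    | 0 => rw [card_zero_le]; rfl
    | m + 1 =>
      rcases eq_or_lt_of_le hk with heq | hlt
      · -- k = n + 1
        have hm : m = n := by omega
        subst hm
        rw [card_le_self]
        rw [brack, if_pos rfl]
      · have hm : m + 1 ≤ n := by omega
        classical
        haveI : Finite {Z : TriSet (m + 1) // Z.le X} := finite_le X
        set P : TriSet (m + 1) → Prop :=
          fun Z => Z.level (Fin.last m) ⊆ X.level (Fin.last n) with hPdef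
        haveI : Finite {Z : TriSet (m + 1) // Z.le X ∧ P Z} :=
          Finite.of_injective
            (fun Z : {Z : TriSet (m+1) // Z.le X ∧ P Z} =>
              (⟨Z.1, Z.2.1⟩ : {Z : TriSet (m+1) // Z.le X}))
            (by intro a b h; have := congrArg Subtype.val h; exact Subtype.ext this)
        haveI : Finite {Z : TriSet (m + 1) // Z.le X ∧ ¬ P Z} :=
          Finite.of_injective
            (fun Z : {Z : TriSet (m+1) // Z.le X ∧ ¬ P Z} =>
              (⟨Z.1, Z.2.1⟩ : {Z : TriSet (m+1) // Z.le X}))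
            (by intro a b h; have := congrArg Subtype.val h; exact Subtype.ext this)
        have e0 : {Z : TriSet (m + 1) // Z.le X} ≃
            {Z : TriSet (m + 1) // Z.le X ∧ P Z} ⊕
            {Z : TriSet (m + 1) // Z.le X ∧ ¬ P Z} :=
          (Equiv.sumCompl (fun Z : {Z : TriSet (m+1) // Z.le X} => P Z.1)).symm.trans
            (Equiv.sumCongr
              (Equiv.subtypeSubtypeEquivSubtypeInter
                (fun Z : TriSet (m+1) => Z.le X) (fun Z => P Z))
              (Equiv.subtypeSubtypeEquivSubtypeInter
                (fun Z : TriSet (m+1) => Z.le X) (fun Z => ¬ P Z)))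
        have e1 : {Z : TriSet (m + 1) // Z.le X ∧ P Z} ≃
            ((X.level (Fin.last n)).powersetCard (m + 1)) × {W : TriSet m // W.le X.init} :=
          topEquiv X
        have e2 : {Z : TriSet (m + 1) // Z.le X ∧ ¬ P Z} ≃
            {Z : TriSet (m + 1) // Z.le X.init} :=
          Equiv.subtypeEquivRight (fun Z => ((le_init_iff X Z).symm))
        rw [Nat.card_congr e0, Nat.card_sum, Nat.card_congr e1, Nat.card_congr e2,
          Nat.card_prod, Nat.card_eq_finsetCard, Finset.card_powersetCard,
          X.card_level, Fin.val_last, ih (m + 1) hm X.init, ih m (by omega) X.init]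
        rw [brack, if_neg (by omega)]
        ring

end TriSet

/-- For `k < n`, the bracket number `[n, k]` counts the number of triangular subsets
with `k` levels of any triangular set with `n` levels. -/
theorem brack_counts_triSets (n k : ℕ) (hkn : k < n) (X : TriSet n) :
    brack n k = Nat.card {Z : TriSet k // Z.le X} :=
  (TriSet.aux n k (le_of_lt hkn) X).symm
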